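/- Let codebook vectors {c_k}_{k=1}^K ⊂ ℝ^d satisfy max_k ‖c_k‖ ≤ R, and for each (t, z) with t ∈ [0, 1) let p(·|z) and q_θ(·|z) be categorical distributions over {1,…,K}. Define velocity fields v*(z,t) = (Σ_k p(k|z) c_k − z)/(1−t) and v_θ(z,t) = (Σ_k q_θ(k|z) c_k − z)/(1−t). Then for every such (t, z), ‖v_θ(z,t) − v*(z,t)‖² ≤ (2R²/(1−t)²) · KL(p(·|z) ‖ q_θ(·|z)). -/

import Mathlib

open Real Set

private lemma hmono : MonotoneOn (fun r : ℝ => (r+1)*Real.log r - 2*(r-1)) (Set.Ioi (0:ℝ)) := by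
  have hd : ∀ x ∈ Set.Ioi (0:ℝ),
      HasDerivAt (fun r : ℝ => (r+1)*Real.log r - 2*(r-1))
        (1 * Real.log x + (x+1) * x⁻¹ - 2 * 1) x := by
    intro x hx
    exact (((hasDerivAt_id x).add_const 1).mul (Real.hasDerivAt_log (ne_of_gt hx))).sub
      (((hasDerivAt_id x).sub_const 1).const_mul 2)
  apply monotoneOn_of_deriv_nonneg (convex_Ioi 0)
  · exact fun x hx => ((hd x hx).continuousAt).continuousWithinAt
  · intro x hx
    rw [interior_Ioi] at hx
    exact ((hd x hx).differentiableAt).differentiableWithinAt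
  · intro x hx
    rw [interior_Ioi] at hx
    rw [(hd x hx).deriv]
    have h1 : 1 - x⁻¹ ≤ Real.log x := Real.one_sub_inv_le_log_of_pos hx
    have hx' : x ≠ 0 := ne_of_gt hx
    have : (x+1) * x⁻¹ = 1 + x⁻¹ := by field_simp
    nlinarith [h1]

private lemma key (r : ℝ) (hr : 0 ≤ r) :
    3*(r-1)^2 ≤ 2*(r+2)*(r*Real.log r - r + 1) := by
  rcases eq_or_lt_of_le hr with h0 | hr
  · simp [← h0]; norm_num
  -- derivative of g
  have hdg : ∀ x ∈ Set.Ioi (0:ℝ),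
      HasDerivAt (fun r : ℝ => 2*(r+2)*(r*Real.log r - r + 1) - 3*(r-1)^2)
        (4*((x+1)*Real.log x - 2*(x-1))) x := by
    intro x hx
    have hx' : (x:ℝ) ≠ 0 := ne_of_gt hx
    have hinner : HasDerivAt (fun r : ℝ => r*Real.log r - r + 1)
        (1 * Real.log x + x * x⁻¹ - 1) x := by
      exact (((hasDerivAt_id x).mul (Real.hasDerivAt_log hx')).sub (hasDerivAt_id x)).add_const 1
    have houter : HasDerivAt (fun r : ℝ => 2*(r+2)) 2 x := by
      simpa using (((hasDerivAt_id x).add_const 2).const_mul 2)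
    have hsq : HasDerivAt (fun r : ℝ => 3*(r-1)^2) (3*(2*(x-1)^1*1)) x := by
      exact (((hasDerivAt_id x).sub_const 1).pow 2).const_mul 3
    have := (houter.mul hinner).sub hsq
    refine this.congr_deriv ?_
    rw [mul_inv_cancel₀ hx']
    ring
  have hg1 : (fun r : ℝ => 2*(r+2)*(r*Real.log r - r + 1) - 3*(r-1)^2) 1 = 0 := by
    simp
  have hcont : ∀ x ∈ Set.Ioi (0:ℝ), ContinuousWithinAt
      (fun r : ℝ => 2*(r+2)*(r*Real.log r - r + 1) - 3*(r-1)^2) (Set.Ioi 0) x :=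
    fun x hx => ((hdg x hx).continuousAt).continuousWithinAt
  have key0 : 0 ≤ 2*(r+2)*(r*Real.log r - r + 1) - 3*(r-1)^2 := by
    rcases le_or_gt 1 r with h1 | h1
    · -- monotone on Ici 1
      have hm : MonotoneOn (fun r : ℝ => 2*(r+2)*(r*Real.log r - r + 1) - 3*(r-1)^2)
          (Set.Ici (1:ℝ)) := by
        apply monotoneOn_of_deriv_nonneg (convex_Ici 1)
        · exact fun x hx => (hcont x (Set.mem_Ioi.mpr (lt_of_lt_of_le one_pos hx))).mono
            (fun y hy => Set.mem_Ioi.mpr (lt_of_lt_of_le one_pos hy))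
        · intro x hx
          rw [interior_Ici] at hx
          exact ((hdg x (Set.mem_Ioi.mpr (lt_trans one_pos hx))).differentiableAt).differentiableWithinAt
        · intro x hx
          rw [interior_Ici] at hx
          rw [(hdg x (Set.mem_Ioi.mpr (lt_trans one_pos hx))).deriv]
          have := hmono (Set.mem_Ioi.mpr one_pos) (Set.mem_Ioi.mpr (lt_trans one_pos hx)) hx.le
          simp at this
          nlinarith [this]
      have := hm (Set.mem_Ici.mpr le_rfl) (Set.mem_Ici.mpr h1) h1
      rw [hg1] at this
      simpa using this
    · -- antitone on Ioc 0 1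
      have hm : AntitoneOn (fun r : ℝ => 2*(r+2)*(r*Real.log r - r + 1) - 3*(r-1)^2)
          (Set.Ioc (0:ℝ) 1) := by
        apply antitoneOn_of_deriv_nonpos (convex_Ioc 0 1)
        · exact fun x hx => (hcont x hx.1).mono (fun y hy => hy.1)
        · intro x hx
          rw [interior_Ioc] at hx
          exact ((hdg x hx.1).differentiableAt).differentiableWithinAt
        · intro x hx
          rw [interior_Ioc] at hx
          rw [(hdg x hx.1).deriv]
          have := hmono (Set.mem_Ioi.mpr hx.1) (Set.mem_Ioi.mpr one_pos) hx.2.le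
          simp at this
          nlinarith [this]
      have := hm (Set.mem_Ioc.mpr ⟨hr, h1.le⟩) (Set.mem_Ioc.mpr ⟨one_pos, le_rfl⟩) h1.le
      rw [hg1] at this
      simpa using this
  linarith [key0]

private lemma pointwise (p q : ℝ) (hp : 0 ≤ p) (hq : 0 < q) :
    3*(p-q)^2 ≤ 2*(p+2*q)*(p*Real.log (p/q) - p + q) := by
  set r := p / q with hr
  have hr0 : 0 ≤ r := div_nonneg hp hq.le
  have hpr : p = r * q := by rw [hr, div_mul_cancel₀ p hq.ne']
  have hk := key r hr0
  have hL : Real.log (p/q) = Real.log r := by rw [hr]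
  have e1 : 3*(p-q)^2 = q^2 * (3*(r-1)^2) := by rw [hpr]; ring
  have e2 : 2*(p+2*q)*(p*Real.log (p/q) - p + q)
      = q^2 * (2*(r+2)*(r*Real.log r - r + 1)) := by
    rw [hL, hpr]; ring
  rw [e1, e2]
  exact mul_le_mul_of_nonneg_left hk (sq_nonneg q)

private lemma pinsker (K : ℕ) (p q : Fin K → ℝ)
    (hp : ∀ k, 0 ≤ p k) (hq : ∀ k, 0 ≤ q k)
    (hp1 : ∑ k, p k = 1) (hq1 : ∑ k, q k = 1)
    (hac : ∀ k, q k = 0 → p k = 0) :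
    (∑ k, |p k - q k|) ^ 2 ≤ 2 * ∑ k, p k * Real.log (p k / q k) := by
  set m : Fin K → ℝ := fun k => (p k + 2 * q k) / 3 with hm
  have hm0 : ∀ k, 0 ≤ m k := fun k => by have := hp k; have := hq k; positivity
  set f : Fin K → ℝ := fun k => Real.sqrt (m k) with hf
  set g : Fin K → ℝ := fun k => if m k = 0 then 0 else |p k - q k| / Real.sqrt (m k) with hg
  have hfg : ∀ k, f k * g k = |p k - q k| := by
    intro k
    by_cases h : m k = 0
    · have hq0 : q k = 0 := by
        have h' : (p k + 2 * q k) / 3 = 0 := h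
        nlinarith [hp k, hq k]
      have hp0 : p k = 0 := hac k hq0
      simp [hf, hg, h, hp0, hq0]
    · have hmpos : 0 < m k := lt_of_le_of_ne (hm0 k) (Ne.symm h)
      have hs : Real.sqrt (m k) ≠ 0 := by positivity
      simp [hf, hg, h]
      field_simp
  have hf2 : ∑ k, f k ^ 2 = 1 := by
    have : ∀ k, f k ^ 2 = m k := fun k => Real.sq_sqrt (hm0 k)
    simp only [this, hm]
    rw [← Finset.sum_div]
    rw [Finset.sum_add_distrib, hp1, ← Finset.mul_sum, hq1]
    norm_num
  have hg2 : ∑ k, g k ^ 2 ≤ 2 * ∑ k, (p k * Real.log (p k / q k) - p k + q k) := by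
    rw [Finset.mul_sum]
    apply Finset.sum_le_sum
    intro k _
    by_cases h : m k = 0
    · have hq0 : q k = 0 := by
        nlinarith [hp k, hq k, (show (p k + 2*q k)/3 = 0 from h)]
      have hp0 : p k = 0 := hac k hq0
      simp [hg, h, hp0, hq0]
    · have hmpos : 0 < m k := lt_of_le_of_ne (hm0 k) (Ne.symm h)
      have hq0 : 0 < q k := by
        rcases (hq k).lt_or_eq with h' | h'
        · exact h'
        · exfalso; apply h
          have hp0 := hac k h'.symm
          simp [hm, hp0, ← h']
      have hk := pointwise (p k) (q k) (hp k) hq0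
      have : g k ^ 2 = (p k - q k)^2 / m k := by
        simp [hg, h]
        rw [div_pow, sq_abs, Real.sq_sqrt (hm0 k)]
      rw [this, div_le_iff₀ hmpos]
      have : 2 * (p k * Real.log (p k / q k) - p k + q k) * m k
          = (2*(p k + 2*q k)*(p k * Real.log (p k / q k) - p k + q k))/3 := by
        simp [hm]; ring
      rw [this]
      linarith [hk]
  have hsum : ∑ k, (p k * Real.log (p k / q k) - p k + q k)
      = ∑ k, p k * Real.log (p k / q k) := by
    rw [Finset.sum_add_distrib, Finset.sum_sub_distrib, hp1, hq1]
    ring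
  calc (∑ k, |p k - q k|) ^ 2 = (∑ k, f k * g k) ^ 2 := by
        simp_rw [hfg]
    _ ≤ (∑ k, f k ^ 2) * ∑ k, g k ^ 2 := Finset.sum_mul_sq_le_sq_mul_sq _ _ _
    _ = ∑ k, g k ^ 2 := by rw [hf2, one_mul]
    _ ≤ 2 * ∑ k, (p k * Real.log (p k / q k) - p k + q k) := hg2
    _ = 2 * ∑ k, p k * Real.log (p k / q k) := by rw [hsum]

/-- Pointwise core of the consistency proposition: for codebook vectors bounded by `R`,
categorical posteriors `p(·|z)`, `q_θ(·|z)` and velocity fields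
`v*(z,t) = (Σ_k p(k|z) c_k − z)/(1−t)`, `v_θ(z,t) = (Σ_k q_θ(k|z) c_k − z)/(1−t)`,
for every `t ∈ [0,1)` and `z`:
`‖v_θ(z,t) − v*(z,t)‖² ≤ (2R²/(1−t)²) · KL(p(·|z) ‖ q_θ(·|z))`. -/
theorem velocity_field_kl_bound
    (d K : ℕ) (c : Fin K → EuclideanSpace ℝ (Fin d)) (R : ℝ)
    (hR : ∀ k, ‖c k‖ ≤ R)
    (Z : Type*) (p qθ : Z → Fin K → ℝ)
    (hp : ∀ z k, 0 ≤ p z k) (hq : ∀ z k, 0 ≤ qθ z k)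
    (hp1 : ∀ z, ∑ k, p z k = 1) (hq1 : ∀ z, ∑ k, qθ z k = 1)
    (hac : ∀ z k, qθ z k = 0 → p z k = 0)
    (zf : Z → EuclideanSpace ℝ (Fin d)) :
    ∀ (t : ℝ), 0 ≤ t → t < 1 → ∀ z : Z,
      ‖(1 - t)⁻¹ • ((∑ k, qθ z k • c k) - zf z)
          - (1 - t)⁻¹ • ((∑ k, p z k • c k) - zf z)‖ ^ 2
        ≤ 2 * R ^ 2 / (1 - t) ^ 2 * ∑ k, p z k * Real.log (p z k / qθ z k) := by
  intro t ht0 ht1 z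
  have h1t : (0:ℝ) < 1 - t := by linarith
  -- simplify the difference
  have hdiff : (1 - t)⁻¹ • ((∑ k, qθ z k • c k) - zf z)
      - (1 - t)⁻¹ • ((∑ k, p z k • c k) - zf z)
      = (1 - t)⁻¹ • ((∑ k, qθ z k • c k) - (∑ k, p z k • c k)) := by
    rw [← smul_sub]
    congr 1
    abel
  rw [hdiff]
  rw [norm_smul]
  have hS : ‖(∑ k, qθ z k • c k) - (∑ k, p z k • c k)‖ ≤ R * ∑ k, |p z k - qθ z k| := by
    rw [← Finset.sum_sub_distrib]
    calc ‖∑ k, (qθ z k • c k - p z k • c k)‖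
        ≤ ∑ k, ‖qθ z k • c k - p z k • c k‖ := norm_sum_le _ _
      _ ≤ ∑ k, R * |p z k - qθ z k| := by
          apply Finset.sum_le_sum
          intro k _
          rw [← sub_smul, norm_smul, Real.norm_eq_abs, abs_sub_comm, mul_comm]
          exact mul_le_mul_of_nonneg_right (hR k) (abs_nonneg _)
      _ = R * ∑ k, |p z k - qθ z k| := by rw [Finset.mul_sum]
  have hpin := pinsker K (p z) (qθ z) (hp z) (hq z) (hp1 z) (hq1 z) (hac z)
  have hT0 : (0:ℝ) ≤ ∑ k, |p z k - qθ z k| := Finset.sum_nonneg fun k _ => abs_nonneg _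
  have hsq : ‖(∑ k, qθ z k • c k) - (∑ k, p z k • c k)‖ ^ 2
      ≤ R ^ 2 * (∑ k, |p z k - qθ z k|) ^ 2 := by
    have := pow_le_pow_left₀ (norm_nonneg _) hS 2
    calc ‖(∑ k, qθ z k • c k) - (∑ k, p z k • c k)‖ ^ 2
        ≤ (R * ∑ k, |p z k - qθ z k|) ^ 2 := this
      _ = R ^ 2 * (∑ k, |p z k - qθ z k|) ^ 2 := by ring
  rw [mul_pow]
  have hnorminv : ‖(1-t)⁻¹‖ ^ 2 = (1-t)⁻¹ ^ 2 := by
    rw [Real.norm_eq_abs, abs_of_pos (inv_pos.mpr h1t)]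
  rw [hnorminv]
  have hfinal : (1-t)⁻¹ ^ 2 * ‖(∑ k, qθ z k • c k) - (∑ k, p z k • c k)‖ ^ 2
      ≤ (1-t)⁻¹ ^ 2 * (R ^ 2 * (2 * ∑ k, p z k * Real.log (p z k / qθ z k))) := by
    apply mul_le_mul_of_nonneg_left _ (by positivity)
    calc ‖(∑ k, qθ z k • c k) - (∑ k, p z k • c k)‖ ^ 2
        ≤ R ^ 2 * (∑ k, |p z k - qθ z k|) ^ 2 := hsq
      _ ≤ R ^ 2 * (2 * ∑ k, p z k * Real.log (p z k / qθ z k)) :=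
          mul_le_mul_of_nonneg_left hpin (sq_nonneg R)
  calc (1-t)⁻¹ ^ 2 * ‖(∑ k, qθ z k • c k) - (∑ k, p z k • c k)‖ ^ 2
      ≤ (1-t)⁻¹ ^ 2 * (R ^ 2 * (2 * ∑ k, p z k * Real.log (p z k / qθ z k))) := hfinal
    _ = 2 * R ^ 2 / (1 - t) ^ 2 * ∑ k, p z k * Real.log (p z k / qθ z k) := by
        field_simp
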